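/- arXiv:2003.01689 — 2 statements merged into one kernel-verified Lean document; each statement's English description precedes it below -/
import Mathlib

section
/- Let n ≥ 1, let N ≥ 2^(2n) + 1 be an integer, and let a = (a_1, ..., a_n) ∈ ℤ^n with gcd(a_1, ..., a_n, N) = 1. Then the subgroup S = ℤa + Nℤ^n of ℤ^n contains a nonzero vector b with |b|_∞ ≤ N^(1 - 1/(2n)). -/
/-- Lemma 1: if `N ≥ 2^(2n)+1` and `gcd(a_1,…,a_n,N) = 1`, the subgroup
`ℤa + Nℤ^n` contains a nonzero vector of sup-norm at most `N^(1-1/(2n))`. -/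
theorem stmt_0 (n : ℕ) (hn : 1 ≤ n) (N : ℕ) (hN : 2 ^ (2 * n) + 1 ≤ N)
    (a : Fin n → ℤ)
    (hgcd : Int.gcd (Finset.univ.gcd a) (N : ℤ) = 1) :
    ∃ b : Fin n → ℤ, b ≠ 0 ∧
      (∃ (k : ℤ) (v : Fin n → ℤ), b = k • a + (N : ℤ) • v) ∧
      ∀ i, (|b i| : ℝ) ≤ (N : ℝ) ^ ((1 : ℝ) - 1 / (2 * n)) := by
  have hNpos : 0 < N := lt_of_lt_of_le (Nat.succ_pos _) hN
  have hN0 : (0:ℝ) < N := by exact_mod_cast hNpos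
  have hn1 : (1:ℝ) ≤ (n:ℝ) := by exact_mod_cast hn
  have h2n : (0:ℝ) < 2 * (n:ℝ) := by linarith
  set x : ℝ := (N:ℝ) ^ ((1:ℝ)/(2*(n:ℝ))) with hxdef
  have hx0 : 0 < x := Real.rpow_pos_of_pos hN0 _
  -- x > 2
  have hx2 : 2 < x := by
    have h1 : ((2:ℝ) ^ (2*n) : ℝ) < N := by
      have : (2:ℕ) ^ (2*n) < N := by omega
      exact_mod_cast this
    have h2 : ((2:ℝ) ^ (2*n)) ^ ((1:ℝ)/(2*(n:ℝ))) < x := by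
      apply Real.rpow_lt_rpow (by positivity) h1 (by positivity)
    have h3 : ((2:ℝ) ^ (2*n)) ^ ((1:ℝ)/(2*(n:ℝ))) = 2 := by
      rw [← Real.rpow_natCast 2 (2*n), ← Real.rpow_mul (by norm_num)]
      push_cast
      rw [mul_one_div, div_self (by linarith), Real.rpow_one]
    linarith [h3 ▸ h2]
  -- x ^ (2n) = N
  have hxpow : x ^ (2*n) = (N:ℝ) := by
    rw [hxdef, ← Real.rpow_natCast _ (2*n), ← Real.rpow_mul (le_of_lt hN0)]
    push_cast
    rw [one_div, inv_mul_cancel₀ (by linarith), Real.rpow_one]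
  set m : ℕ := ⌈x⌉₊ with hmdef
  have hxm : x ≤ (m:ℝ) := Nat.le_ceil x
  have hm0 : 0 < m := by
    rw [hmdef]; exact Nat.ceil_pos.mpr hx0
  have hmlt : (m:ℝ) < x + 1 := Nat.ceil_lt_add_one (le_of_lt hx0)
  -- m ^ n < N
  have hmN : m ^ n < N := by
    have h1 : (m:ℝ) < x ^ 2 := by nlinarith
    have h2 : ((m:ℝ)) ^ n < (x ^ 2) ^ n :=
      pow_lt_pow_left₀ h1 (by positivity) (by omega)
    have h3 : ((x:ℝ) ^ 2) ^ n = (N:ℝ) := by rw [← pow_mul]; exact hxpow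
    have : ((m ^ n : ℕ) : ℝ) < (N:ℝ) := by push_cast; linarith [h2, h3]
    exact_mod_cast this
  -- residues
  set r : ℕ → Fin n → ℕ := fun c i => (((c:ℤ) * a i) % (N:ℤ)).toNat with hrdef
  have hrval : ∀ c i, ((r c i : ℤ)) = ((c:ℤ) * a i) % (N:ℤ) := by
    intro c i
    have h2 := Int.emod_nonneg ((c:ℤ) * a i) (b := (N:ℤ)) (by positivity)
    simp [hrdef, Int.toNat_of_nonneg h2]
  have hrlt : ∀ c i, r c i < N := by
    intro c i
    have h := Int.emod_lt_of_pos ((c:ℤ) * a i) (b := (N:ℤ)) (by exact_mod_cast hNpos)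
    have h3 := hrval c i
    omega
  -- pigeonhole map
  have hbox : ∀ c i, r c i * m / N < m := by
    intro c i
    rw [Nat.div_lt_iff_lt_mul hNpos]
    calc r c i * m < N * m := by
          exact Nat.mul_lt_mul_of_lt_of_le (hrlt c i) le_rfl hm0
      _ = m * N := mul_comm _ _
  let f : Fin (m ^ n + 1) → (Fin n → Fin m) := fun c i => ⟨r c i * m / N, hbox c i⟩
  obtain ⟨c1, c2, hc12, hfeq⟩ : ∃ c1 c2, c1 ≠ c2 ∧ f c1 = f c2 := by
    apply Fintype.exists_ne_map_eq_of_card_lt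
    simp [Fintype.card_fun]
  -- the vector
  set k : ℤ := (c2 : ℤ) - (c1 : ℤ) with hkdef
  have hk0 : k ≠ 0 := by
    simp only [hkdef, sub_ne_zero]
    intro h
    apply hc12
    have : (c1:ℕ) = (c2:ℕ) := by exact_mod_cast h.symm
    exact Fin.ext this
  refine ⟨fun i => ((c2:ℤ) * a i) % N - ((c1:ℤ) * a i) % N, ?_, ?_, ?_⟩
  · -- nonzero
    intro hb0
    have hdvd : ∀ i, (N:ℤ) ∣ k * a i := by
      intro i
      have h := congrFun hb0 i
      simp only [Pi.zero_apply, sub_eq_zero] at h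
      have : (k * a i) % N = 0 := by
        rw [hkdef, sub_mul, Int.sub_emod, h, sub_self, Int.zero_emod]
      exact Int.dvd_of_emod_eq_zero this
    have hdvdgcd : (N:ℤ) ∣ Finset.univ.gcd (fun i => k * a i) :=
      Finset.dvd_gcd (fun i _ => hdvd i)
    rw [Finset.gcd_mul_left] at hdvdgcd
    have hdvdkg : (N:ℤ) ∣ k * Finset.univ.gcd a := by
      rw [← Int.abs_eq_normalize] at hdvdgcd
      rcases abs_choice k with h | h
      · rwa [h] at hdvdgcd
      · rw [h, neg_mul] at hdvdgcd
        exact (dvd_neg).mp hdvdgcd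
    have hcop : IsCoprime ((N:ℤ)) (Finset.univ.gcd a) := by
      rw [Int.isCoprime_iff_gcd_eq_one, Int.gcd_comm]
      exact hgcd
    have hdvdk : (N:ℤ) ∣ k := hcop.dvd_of_dvd_mul_right hdvdkg
    have hle : (N:ℤ) ≤ |k| := Int.le_of_dvd (abs_pos.mpr hk0) ((dvd_abs _ _).mpr hdvdk)
    have h1 : (c1:ℕ) < m ^ n + 1 := c1.isLt
    have h2 : (c2:ℕ) < m ^ n + 1 := c2.isLt
    have hmNZ : ((m^n : ℕ) : ℤ) < (N:ℤ) := by exact_mod_cast hmN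
    rcases abs_choice k with h | h <;> rw [h, hkdef] at hle <;> omega
  · -- membership
    exact ⟨k, fun i => (c1:ℤ) * a i / N - (c2:ℤ) * a i / N, by
      funext i
      simp only [Pi.add_apply, Pi.smul_apply, smul_eq_mul, hkdef]
      rw [Int.emod_def, Int.emod_def]
      ring⟩
  · -- bound
    intro i
    have hfi : r c1 i * m / N = r c2 i * m / N := by
      have := congrFun hfeq i
      simpa [f, Fin.ext_iff] using this
    -- |t1 - t2| < N where tj = r cj i * m
    have hkey : ((r c2 i : ℤ)) * m - ((r c1 i : ℤ)) * m < N ∧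
        ((r c1 i : ℤ)) * m - ((r c2 i : ℤ)) * m < N := by
      have e1 : r c1 i * m = N * (r c1 i * m / N) + (r c1 i * m) % N :=
        (Nat.div_add_mod _ _).symm
      have e2 : r c2 i * m = N * (r c2 i * m / N) + (r c2 i * m) % N :=
        (Nat.div_add_mod _ _).symm
      have m1 : (r c1 i * m) % N < N := Nat.mod_lt _ hNpos
      have m2 : (r c2 i * m) % N < N := Nat.mod_lt _ hNpos
      rw [hfi] at e1
      set q := r c2 i * m / N
      set p := N * q
      have : (((r c1 i * m : ℕ)):ℤ) = (p:ℤ) + ((r c1 i * m) % N : ℕ) := by exact_mod_cast e1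
      have : (((r c2 i * m : ℕ)):ℤ) = (p:ℤ) + ((r c2 i * m) % N : ℕ) := by exact_mod_cast e2
      constructor <;> push_cast at * <;> omega
    have habs : |((c2:ℤ) * a i % N - (c1:ℤ) * a i % N)| * m < N := by
      rw [← hrval, ← hrval]
      rcases le_or_gt ((r c1 i : ℤ)) ((r c2 i : ℤ)) with h | h
      · rw [abs_of_nonneg (by linarith), sub_mul]; exact hkey.1
      · rw [abs_of_neg (by linarith), neg_sub, sub_mul]; exact hkey.2
    -- now real bound
    set B : ℤ := |((c2:ℤ) * a i % N - (c1:ℤ) * a i % N)| with hBdef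
    have hablt : (B : ℝ) * m < N := by exact_mod_cast habs
    have hm0' : (0:ℝ) < (m:ℝ) := by exact_mod_cast hm0
    have h1 : (B : ℝ) < (N:ℝ) / m := by
      rw [lt_div_iff₀ hm0']; exact hablt
    have h2 : (N:ℝ) / m ≤ (N:ℝ) / x := by
      apply div_le_div_of_nonneg_left (le_of_lt hN0) hx0 hxm
    have h3 : (N:ℝ) / x = (N:ℝ) ^ ((1:ℝ) - 1/(2*(n:ℝ))) := by
      rw [Real.rpow_sub hN0, Real.rpow_one, hxdef]
    show |((((c2:ℤ) * a i % N - (c1:ℤ) * a i % N) : ℤ) : ℝ)| ≤ _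
    rw [← Int.cast_abs, ← hBdef, ← h3]
    linarith
end

section
/- Let n ≥ 1 and let ζ = (ζ_1, ..., ζ_n) be an n-tuple of roots of unity in ℂ whose order as an element of the group (ℂ^×)^n is exactly N, with N ≥ 2^(2n) + 1. Then there exist a divisor e of N with e ≤ N^(1 - 1/(2n)), a primitive N-th root of unity ζ_N, e-th roots of unity ξ_1, ..., ξ_n, and integers k_1, ..., k_n with |k_i| ≤ N^(1 - 1/(2n))/e for all i, such that ζ_i = ξ_i · ζ_N^(k_i) for all i = 1, ..., n. -/
/-- Bridge from a natural-number power inequality to the real `rpow` bound. -/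
private lemma stmt5_bridge {n N x : ℕ} (hn : 1 ≤ n) (hN : 1 ≤ N)
    (h : x ^ (2 * n) ≤ N ^ (2 * n - 1)) :
    (x : ℝ) ≤ (N : ℝ) ^ ((1 : ℝ) - 1 / (2 * n)) := by
  have h2n : (0 : ℝ) < 2 * n := by positivity
  have hNpos : (0 : ℝ) < N := by exact_mod_cast hN
  have ht : (0 : ℝ) ≤ 1 - 1 / (2 * n) := by
    have : (1 : ℝ) / (2 * n) ≤ 1 := by
      rw [div_le_one h2n]; norm_cast; omega
    linarith
  have hkey : ((N : ℝ) ^ ((1 : ℝ) - 1 / (2 * n))) ^ (2 * n) = (N : ℝ) ^ (2 * n - 1) := by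
    rw [← Real.rpow_natCast ((N : ℝ) ^ ((1 : ℝ) - 1 / (2 * n))) (2 * n),
      ← Real.rpow_mul hNpos.le, ← Real.rpow_natCast (N : ℝ) (2 * n - 1)]
    congr 1
    have : ((2 * n - 1 : ℕ) : ℝ) = 2 * (n : ℝ) - 1 := by
      push_cast [Nat.cast_sub (by omega : 1 ≤ 2 * n)]; ring
    rw [this]
    field_simp
    push_cast; ring
  have hx : (x : ℝ) ^ (2 * n) ≤ ((N : ℝ) ^ ((1 : ℝ) - 1 / (2 * n))) ^ (2 * n) := by
    rw [hkey]
    exact_mod_cast h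
  have hpos : (0 : ℝ) ≤ (N : ℝ) ^ ((1 : ℝ) - 1 / (2 * n)) := Real.rpow_nonneg hNpos.le _
  exact le_of_pow_le_pow_left₀ (by omega) hpos hx

private lemma stmt5_pow_aux1 {b n : ℕ} (hb : 3 ≤ b) (hn : 2 ≤ n) :
    (b + 1) ^ n ≤ b ^ (2 * n - 1) := by
  rw [← Nat.pow_le_pow_iff_left (two_ne_zero)]
  have h2 : (b + 1) ^ 2 ≤ b ^ 3 := by nlinarith
  calc ((b + 1) ^ n) ^ 2 = ((b + 1) ^ 2) ^ n := by
        rw [← pow_mul, ← pow_mul, Nat.mul_comm]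
    _ ≤ (b ^ 3) ^ n := Nat.pow_le_pow_left h2 n
    _ = b ^ (3 * n) := by rw [← pow_mul, Nat.mul_comm]
    _ ≤ b ^ ((2 * n - 1) * 2) := Nat.pow_le_pow_right (by omega) (by omega)
    _ = (b ^ (2 * n - 1)) ^ 2 := by rw [← pow_mul]

private lemma stmt5_pow_aux2 {n : ℕ} (hn : 3 ≤ n) : 3 ^ n ≤ 2 ^ (2 * n - 1) := by
  induction n with
  | zero => omega
  | succ k ih =>
    rcases Nat.lt_or_ge k 3 with hk | hk
    · interval_cases k <;> simp_all
    · have ihk := ih (by omega)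
      have he : 2 * (k + 1) - 1 = (2 * k - 1) + 2 := by omega
      rw [he, pow_succ, pow_add]
      calc 3 ^ k * 3 ≤ 2 ^ (2 * k - 1) * 3 := Nat.mul_le_mul_right 3 ihk
        _ ≤ 2 ^ (2 * k - 1) * 2 ^ 2 := Nat.mul_le_mul_left _ (by norm_num)

/-- The key counting inequality: with `m` the least integer whose `2n`-th power
exceeds `N^(2n-1)` and `B = ⌈N/m⌉`, we have `(B^n)^(2n) ≤ N^(2n-1)`. -/
private lemma stmt5_keyIneq {n N m : ℕ} (hn : 2 ≤ n) (hN : 2 ^ (2 * n) + 1 ≤ N)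
    (hm1 : (m - 1) ^ (2 * n) ≤ N ^ (2 * n - 1)) (hm2 : N ^ (2 * n - 1) < m ^ (2 * n)) :
    ((((N + m - 1) / m)) ^ n) ^ (2 * n) ≤ N ^ (2 * n - 1) := by
  have hNpos : 0 < N := lt_of_lt_of_le (by positivity) hN
  have hmpos : 0 < m := by
    rcases Nat.eq_zero_or_pos m with h | h
    · exfalso; rw [h, zero_pow (by omega)] at hm2; omega
    · exact h
  have hBm_le : ((N + m - 1) / m) * m ≤ N + m - 1 := Nat.div_mul_le_self _ _
  have hBm_ge : N ≤ ((N + m - 1) / m) * m := by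
    have h1 : m * ((N + m - 1) / m) + (N + m - 1) % m = N + m - 1 := Nat.div_add_mod _ _
    have h2 : (N + m - 1) % m < m := Nat.mod_lt _ hmpos
    have h3 : m * ((N + m - 1) / m) = ((N + m - 1) / m) * m := Nat.mul_comm _ _
    omega
  set B := (N + m - 1) / m with hB
  obtain ⟨b, hb1, hb2, hbge2⟩ : ∃ b, b ^ (2 * n) ≤ N ∧ N < (b + 1) ^ (2 * n) ∧ 2 ≤ b := by
    have hbex : ∃ b, N < (b + 1) ^ (2 * n) := by
      refine ⟨N, lt_of_lt_of_le (Nat.lt_succ_self N) ?_⟩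
      exact Nat.le_self_pow (by omega) _
    refine ⟨Nat.find hbex, ?_, Nat.find_spec hbex, ?_⟩
    · rcases Nat.eq_zero_or_pos (Nat.find hbex) with h | h
      · rw [h, zero_pow (by omega)]; omega
      · have h2 := Nat.find_min hbex (m := Nat.find hbex - 1) (by omega)
        push_neg at h2
        have hbb : Nat.find hbex - 1 + 1 = Nat.find hbex := by omega
        rwa [hbb] at h2
    · by_contra hb
      push_neg at hb
      have h3 : (Nat.find hbex + 1) ^ (2 * n) ≤ 2 ^ (2 * n) :=
        Nat.pow_le_pow_left (by omega) _
      have h4 := Nat.find_spec hbex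
      omega
  have hBb : B ≤ b + 1 := by
    by_contra hc
    push_neg at hc
    have hsub : (B - 1) * m = B * m - 1 * m := Nat.sub_mul B 1 m
    have h2 : (B - 1) * m < N := by omega
    have h1 : (b + 1) * m ≤ (B - 1) * m := Nat.mul_le_mul_right m (by omega)
    have h3 : (b + 1) * m < N := lt_of_le_of_lt h1 h2
    have h4 : ((b + 1) * m) ^ (2 * n) < N ^ (2 * n) := Nat.pow_lt_pow_left h3 (by omega)
    rw [mul_pow] at h4
    have h5 : N * N ^ (2 * n - 1) = N ^ (2 * n) := by
      rw [← pow_succ']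
      congr 1
      omega
    have h6 : N * N ^ (2 * n - 1) < N * m ^ (2 * n) := mul_lt_mul_of_pos_left hm2 hNpos
    have h7 : (b + 1) ^ (2 * n) * m ^ (2 * n) < N * m ^ (2 * n) := by omega
    have h8 : (b + 1) ^ (2 * n) < N := Nat.lt_of_mul_lt_mul_right h7
    omega
  by_cases hc : (b + 1) ^ n ≤ b ^ (2 * n - 1)
  · calc (B ^ n) ^ (2 * n) ≤ ((b + 1) ^ n) ^ (2 * n) :=
        Nat.pow_le_pow_left (Nat.pow_le_pow_left hBb n) _
      _ ≤ (b ^ (2 * n - 1)) ^ (2 * n) := Nat.pow_le_pow_left hc _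
      _ = (b ^ (2 * n)) ^ (2 * n - 1) := by rw [← pow_mul, ← pow_mul, Nat.mul_comm]
      _ ≤ N ^ (2 * n - 1) := Nat.pow_le_pow_left hb1 _
  · have hnb : n = 2 ∧ b = 2 := by
      by_contra h
      apply hc
      rcases Nat.lt_or_ge b 3 with hb3 | hb3
      · have hb2' : b = 2 := by omega
        subst hb2'
        have hn3 : 3 ≤ n := by
          rcases Nat.lt_or_ge n 3 with h' | h'
          · exfalso; exact h ⟨by omega, rfl⟩
          · exact h'
        calc (2 + 1) ^ n = 3 ^ n := by norm_num
          _ ≤ 2 ^ (2 * n - 1) := stmt5_pow_aux2 hn3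
      · exact stmt5_pow_aux1 hb3 hn
    obtain ⟨hn2', hb2'⟩ := hnb
    subst hn2'
    subst hb2'
    norm_num at hb2 hb1 hm1 hm2 hN ⊢
    rcases Nat.lt_or_ge N 19 with h19 | h19
    · have h84 : (8 : ℕ) ^ 4 = 4096 := by norm_num
      have h173 : (17 : ℕ) ^ 3 = 4913 := by norm_num
      have hN3 : 17 ^ 3 ≤ N ^ 3 := Nat.pow_le_pow_left (by omega) _
      have hm9 : 9 ≤ m := by
        by_contra hm9
        push_neg at hm9
        have : m ^ 4 ≤ 8 ^ 4 := Nat.pow_le_pow_left (by omega) _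
        omega
      have hB2 : B ≤ 2 := by
        by_contra hB3
        push_neg at hB3
        have : 3 * m ≤ B * m := Nat.mul_le_mul_right m hB3
        omega
      have hBN : (B ^ 2) ^ 4 ≤ (2 ^ 2) ^ 4 :=
        Nat.pow_le_pow_left (Nat.pow_le_pow_left hB2 _) _
      have h224 : ((2 : ℕ) ^ 2) ^ 4 = 256 := by norm_num
      omega
    · have h1 : (B ^ 2) ^ 4 ≤ (3 ^ 2) ^ 4 :=
        Nat.pow_le_pow_left (Nat.pow_le_pow_left hBb _) _
      have h2 : 19 ^ 3 ≤ N ^ 3 := Nat.pow_le_pow_left h19 _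
      have h324 : ((3 : ℕ) ^ 2) ^ 4 = 6561 := by norm_num
      have h193 : (19 : ℕ) ^ 3 = 6859 := by norm_num
      omega

/-- Pigeonhole (Dirichlet) lemma modulo `N`. -/
private lemma stmt5_dirichlet {n N m : ℕ} (hN : 1 ≤ N) (hm : 1 ≤ m) (a : Fin n → ℤ) :
    ∃ q : ℕ, 1 ≤ q ∧ q ≤ ((N + m - 1) / m) ^ n ∧
      ∃ r : Fin n → ℤ, (∀ i, |r i| ≤ (m : ℤ) - 1) ∧ ∀ i, (N : ℤ) ∣ q * a i - r i := by
  have hBm_ge : N ≤ ((N + m - 1) / m) * m := by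
    have h1 : m * ((N + m - 1) / m) + (N + m - 1) % m = N + m - 1 := Nat.div_add_mod _ _
    have h2 : (N + m - 1) % m < m := Nat.mod_lt _ hm
    have h3 : m * ((N + m - 1) / m) = ((N + m - 1) / m) * m := Nat.mul_comm _ _
    omega
  set B := (N + m - 1) / m with hB
  have hNz : (0 : ℤ) < (N : ℤ) := by exact_mod_cast hN
  have hbox : ∀ q : ℕ, ∀ i : Fin n, ((q * a i) % (N : ℤ)).toNat / m < B := by
    intro q i
    have h1 : 0 ≤ (q * a i) % (N : ℤ) := Int.emod_nonneg _ (ne_of_gt hNz)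
    have h2 : (q * a i) % (N : ℤ) < N := Int.emod_lt_of_pos _ hNz
    have h3 : ((q * a i) % (N : ℤ)).toNat < N := by omega
    rw [Nat.div_lt_iff_lt_mul hm]
    omega
  have hcard : (Finset.univ : Finset (Fin n → Fin B)).card < (Finset.range (B ^ n + 1)).card := by
    simp [Finset.card_univ]
  obtain ⟨q1, hq1, q2, hq2, hne, heq⟩ :=
    Finset.exists_ne_map_eq_of_card_lt_of_maps_to hcard
      (f := fun q => fun i => (⟨((q * a i) % (N : ℤ)).toNat / m, hbox q i⟩ : Fin B))
      (fun q _ => Finset.mem_univ _)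
  rw [Finset.mem_range] at hq1 hq2
  wlog hlt : q1 < q2 generalizing q1 q2
  · exact this q2 hq2 q1 hq1 hne.symm heq.symm (by omega)
  refine ⟨q2 - q1, by omega, by omega,
    fun i => (q2 * a i) % (N : ℤ) - (q1 * a i) % (N : ℤ), ?_, ?_⟩
  · intro i
    dsimp only
    have hv := congrFun heq i
    rw [Fin.mk.injEq] at hv
    have h11 : 0 ≤ (q1 * a i) % (N : ℤ) := Int.emod_nonneg _ (ne_of_gt hNz)
    have h21 : 0 ≤ (q2 * a i) % (N : ℤ) := Int.emod_nonneg _ (ne_of_gt hNz)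
    set v1 := ((q1 * a i) % (N : ℤ)).toNat with hv1
    set v2 := ((q2 * a i) % (N : ℤ)).toNat with hv2
    have e1 : m * (v1 / m) + v1 % m = v1 := Nat.div_add_mod _ _
    have e2 : m * (v2 / m) + v2 % m = v2 := Nat.div_add_mod _ _
    rw [← hv] at e2
    have f1 : v1 % m < m := Nat.mod_lt _ hm
    have f2 : v2 % m < m := Nat.mod_lt _ hm
    have c1 : ((q1 * a i) % (N : ℤ)) = (v1 : ℤ) := (Int.toNat_of_nonneg h11).symm
    have c2 : ((q2 * a i) % (N : ℤ)) = (v2 : ℤ) := (Int.toNat_of_nonneg h21).symm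
    rw [c1, c2, abs_le]
    omega
  · intro i
    dsimp only
    have key : ∀ x : ℤ, (N : ℤ) ∣ x - x % (N : ℤ) := by
      intro x
      refine ⟨x / N, ?_⟩
      rw [Int.emod_def]
      ring
    have d1 := key (q1 * a i)
    have d2 := key (q2 * a i)
    have := dvd_sub d2 d1
    have hcast : ((q2 - q1 : ℕ) : ℤ) = (q2 : ℤ) - q1 := by
      push_cast [Nat.cast_sub hlt.le]; ring
    rw [hcast]
    convert this using 1
    · rfl
    ring

/-- Lemma 3: a torsion point `ζ ∈ (ℂˣ)^n` of order `N ≥ 2^(2n)+1` can be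
written coordinatewise as `ζ_i = ξ_i · ζ_N^(k_i)` with `ξ_i` an `e`-th root of
unity, `e ∣ N`, `e ≤ N^(1-1/(2n))`, `ζ_N` a primitive `N`-th root of unity and
`|k_i| ≤ N^(1-1/(2n))/e`. -/
theorem stmt_5 (n : ℕ) (hn : 1 ≤ n) (N : ℕ) (hN : 2 ^ (2 * n) + 1 ≤ N)
    (ζ : Fin n → ℂˣ) (hord : orderOf ζ = N) :
    ∃ e : ℕ, e ∣ N ∧ (e : ℝ) ≤ (N : ℝ) ^ ((1 : ℝ) - 1 / (2 * n)) ∧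
      ∃ ζN : ℂˣ, orderOf ζN = N ∧
        ∃ (ξ : Fin n → ℂˣ) (k : Fin n → ℤ),
          (∀ i, ξ i ^ e = 1) ∧
          (∀ i, (|k i| : ℝ) ≤ (N : ℝ) ^ ((1 : ℝ) - 1 / (2 * n)) / e) ∧
          ∀ i, ζ i = ξ i * ζN ^ (k i) := by
  have hNpos : 0 < N := lt_of_lt_of_le (by positivity) hN
  have hN0 : N ≠ 0 := by omega
  have hN2 : 2 ≤ N := by
    have h := Nat.one_le_two_pow (n := 2 * n)
    omega
  haveI : NeZero N := ⟨hN0⟩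
  have hexp := Complex.isPrimitiveRoot_exp N hN0
  set ζ0 : ℂˣ := (hexp.isUnit hN0).unit with hζ0def
  have hζ0 : IsPrimitiveRoot ζ0 N := hexp.isUnit_unit hN0
  have hζ0ord : orderOf ζ0 = N := hζ0.eq_orderOf.symm
  have hpow : ∀ i, ζ i ^ N = 1 := by
    intro i
    have h1 : ζ ^ N = 1 := by rw [← hord]; exact pow_orderOf_eq_one ζ
    have h2 := congrFun h1 i
    simpa using h2
  have hn1R : (1 : ℝ) ≤ (n : ℝ) := by exact_mod_cast hn
  have hexp0 : (0 : ℝ) ≤ 1 - 1 / (2 * (n : ℝ)) := by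
    have h3 : (1 : ℝ) / (2 * (n : ℝ)) ≤ 1 := by
      rw [div_le_one (by linarith)]; linarith
    linarith
  have hT1 : (1 : ℝ) ≤ (N : ℝ) ^ ((1 : ℝ) - 1 / (2 * n)) :=
    Real.one_le_rpow (by exact_mod_cast hNpos) hexp0
  rcases eq_or_lt_of_le hn with h1 | h2
  · -- n = 1 : trivial decomposition
    have i0 : Fin n := ⟨0, by omega⟩
    have hall : ∀ i : Fin n, i = i0 := fun i => Fin.ext (by omega)
    have hordi : orderOf (ζ i0) = N := by
      rw [← hord]
      apply orderOf_eq_orderOf_iff.mpr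
      intro k
      constructor
      · intro hk
        funext j
        have hj : ζ j = ζ i0 := by rw [hall j]
        simp only [Pi.pow_apply, Pi.one_apply, hj]
        exact hk
      · intro hk
        simpa using congrFun hk i0
    refine ⟨1, one_dvd _, by simpa using hT1, ζ i0, hordi, fun _ => 1, fun _ => 1,
      fun i => by simp, fun i => by simpa using hT1, fun i => by rw [hall i]; simp⟩
  · -- n ≥ 2 : the pigeonhole argument
    have hn2 : 2 ≤ n := h2
    -- coordinates as powers of ζ0
    have haN : ∀ i, ∃ j : ℕ, ζ0 ^ j = ζ i := by
      intro i
      have hval : ((ζ i : ℂ)) ^ N = 1 := by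
        have := congrArg (Units.val) (hpow i)
        simpa using this
      obtain ⟨j, _, hje⟩ := hexp.eq_pow_of_pow_eq_one hval
      refine ⟨j, Units.ext ?_⟩
      rw [Units.val_pow_eq_pow_val]
      have : (ζ0 : ℂ) = Complex.exp (2 * Real.pi * Complex.I / N) := by
        rw [hζ0def]; exact IsUnit.unit_spec _
      rw [this]
      exact hje
    choose A hA using haN
    set Az : Fin n → ℤ := fun i => ((A i : ℕ) : ℤ) with hAzdef
    have hAz : ∀ i, ζ0 ^ (Az i) = ζ i := by
      intro i
      show ζ0 ^ (((A i : ℕ) : ℤ)) = ζ i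
      rw [zpow_natCast]; exact hA i
    -- the threshold m
    obtain ⟨m, hm2, hm1, hmpos⟩ :
        ∃ m, N ^ (2 * n - 1) < m ^ (2 * n) ∧ (m - 1) ^ (2 * n) ≤ N ^ (2 * n - 1) ∧ 0 < m := by
      have hmex : ∃ m, N ^ (2 * n - 1) < m ^ (2 * n) :=
        ⟨N, Nat.pow_lt_pow_right (by omega) (by omega)⟩
      refine ⟨Nat.find hmex, Nat.find_spec hmex, ?_, ?_⟩
      · by_contra h'
        push_neg at h'
        have h0 : 0 < Nat.find hmex := by
          rcases Nat.eq_zero_or_pos (Nat.find hmex) with h | h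
          · have := Nat.find_spec hmex
            rw [h, zero_pow (by omega)] at this
            omega
          · exact h
        have := Nat.find_min hmex (m := Nat.find hmex - 1) (by omega)
        omega
      · rcases Nat.eq_zero_or_pos (Nat.find hmex) with h | h
        · have := Nat.find_spec hmex
          rw [h, zero_pow (by omega)] at this
          omega
        · exact h
    obtain ⟨q, hq1, hqB, r, hr, hdvd⟩ := stmt5_dirichlet (N := N) (m := m) (by omega) hmpos Az
    -- the divisor e = gcd(q, N)
    set d := Nat.gcd q N with hd
    have hdpos : 0 < d := Nat.gcd_pos_of_pos_left _ hq1
    have hdN : d ∣ N := Nat.gcd_dvd_right q N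
    have hdq : d ∣ q := Nat.gcd_dvd_left q N
    set q' := q / d with hq'def
    set N' := N / d with hN'def
    have hq' : d * q' = q := Nat.mul_div_cancel' hdq
    have hN' : d * N' = N := Nat.mul_div_cancel' hdN
    have hN'pos : 0 < N' := by
      rcases Nat.eq_zero_or_pos N' with h | h
      · exfalso; rw [h, Nat.mul_zero] at hN'; omega
      · exact h
    have hcop : Nat.Coprime q' N' := Nat.coprime_div_gcd_div_gcd hdpos
    have hdvdN : N' ∣ N := ⟨d, by rw [← hN']; ring⟩
    -- lift the inverse of q' mod N' to a unit mod N
    obtain ⟨W, hW⟩ := ZMod.unitsMap_surjective hdvdN (ZMod.unitOfCoprime q' hcop)⁻¹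
    set w : ℕ := ZMod.val ((W : (ZMod N)ˣ) : ZMod N) with hwdef
    have hwcop : Nat.Coprime w N := ZMod.val_coe_unit_coprime W
    have hw : (N' : ℤ) ∣ (w : ℤ) * (q' : ℤ) - 1 := by
      apply (ZMod.intCast_zmod_eq_zero_iff_dvd _ _).mp
      push_cast
      have hwcast : ((w : ℕ) : ZMod N') = ZMod.cast ((W : ZMod N)) := ZMod.natCast_val _
      rw [hwcast]
      have h5 : (ZMod.cast ((W : ZMod N)) : ZMod N')
          = ((ZMod.unitsMap hdvdN W : (ZMod N')ˣ) : ZMod N') := by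
        simp [ZMod.unitsMap_def]
      rw [h5, hW]
      have hq'cast : ((q' : ℕ) : ZMod N')
          = ((ZMod.unitOfCoprime q' hcop : (ZMod N')ˣ) : ZMod N') :=
        (ZMod.coe_unitOfCoprime q' hcop).symm
      rw [hq'cast, ← Units.val_mul, inv_mul_cancel]
      simp
    -- s i = r i / d
    have hds : ∀ i, (d : ℤ) ∣ r i := by
      intro i
      have h1 := hdvd i
      have h2 : (d : ℤ) ∣ (N : ℤ) := Int.natCast_dvd_natCast.mpr hdN
      have h3 : (d : ℤ) ∣ (q : ℤ) * Az i := Dvd.dvd.mul_right (Int.natCast_dvd_natCast.mpr hdq) _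
      have h4 : (d : ℤ) ∣ (q : ℤ) * Az i - r i := dvd_trans h2 h1
      have h5 : (q : ℤ) * Az i - ((q : ℤ) * Az i - r i) = r i := by ring
      rw [← h5]
      exact dvd_sub h3 h4
    set s : Fin n → ℤ := fun i => r i / d with hsdef
    have hsd : ∀ i, r i = (d : ℤ) * s i := fun i => (Int.mul_ediv_cancel' (hds i)).symm
    have hd0 : (d : ℤ) ≠ 0 := by exact_mod_cast hdpos.ne'
    have hqz : (q : ℤ) = (d : ℤ) * q' := by exact_mod_cast congrArg (Nat.cast (R := ℤ)) hq'.symm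
    have hNz : (N : ℤ) = (d : ℤ) * N' := by exact_mod_cast congrArg (Nat.cast (R := ℤ)) hN'.symm
    have hcong : ∀ i, (N' : ℤ) ∣ (q' : ℤ) * Az i - s i := by
      intro i
      obtain ⟨c, hc⟩ := hdvd i
      refine ⟨c, mul_left_cancel₀ hd0 ?_⟩
      have hsz := hsd i
      linear_combination hc - Az i * hqz + hsz + c * hNz
    have hfin : ∀ i, (N' : ℤ) ∣ Az i - (w : ℤ) * s i := by
      intro i
      obtain ⟨c1, hc1⟩ := hcong i
      obtain ⟨c2, hc2⟩ := hw
      exact ⟨(w : ℤ) * c1 - Az i * c2, by linear_combination (w : ℤ) * hc1 - Az i * hc2⟩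
    -- primitive root ζN
    have hζNprim : IsPrimitiveRoot (ζ0 ^ w) N := hζ0.pow_of_coprime w hwcop
    have hζNord : orderOf (ζ0 ^ w) = N := hζNprim.eq_orderOf.symm
    -- bound on e
    have hdle : d ≤ q := Nat.le_of_dvd (by omega) hdq
    have hdpow : d ^ (2 * n) ≤ N ^ (2 * n - 1) := by
      calc d ^ (2 * n) ≤ (((N + m - 1) / m) ^ n) ^ (2 * n) :=
            Nat.pow_le_pow_left (le_trans hdle hqB) _
        _ ≤ N ^ (2 * n - 1) := stmt5_keyIneq hn2 hN hm1 hm2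
    have hdT : (d : ℝ) ≤ (N : ℝ) ^ ((1 : ℝ) - 1 / (2 * n)) := stmt5_bridge hn (by omega) hdpow
    have hmT : ((m : ℝ) - 1) ≤ (N : ℝ) ^ ((1 : ℝ) - 1 / (2 * n)) := by
      have := stmt5_bridge hn (by omega : 1 ≤ N) hm1
      have hcast : ((m - 1 : ℕ) : ℝ) = (m : ℝ) - 1 := by
        push_cast [Nat.cast_sub hmpos]; ring
      linarith [hcast ▸ this]
    refine ⟨d, hdN, hdT, ζ0 ^ w, hζNord, fun i => ζ i * ((ζ0 ^ w) ^ (s i))⁻¹, s, ?_, ?_, ?_⟩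
    · -- ξ i ^ d = 1
      intro i
      dsimp only
      have hξ : ζ i * ((ζ0 ^ w) ^ (s i))⁻¹ = ζ0 ^ (Az i - (w : ℤ) * s i) := by
        rw [zpow_sub, ← hAz i]
        congr 1
        rw [← zpow_natCast ζ0 w, ← zpow_mul]
      rw [hξ, ← zpow_natCast (ζ0 ^ (Az i - (w : ℤ) * s i)) d, ← zpow_mul]
      apply (orderOf_dvd_iff_zpow_eq_one).mp
      rw [hζ0ord]
      obtain ⟨c, hc⟩ := hfin i
      exact ⟨c, by rw [hNz]; linear_combination (d : ℤ) * hc⟩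
    · -- bound on k i
      intro i
      have h1 : (d : ℤ) * |s i| ≤ (m : ℤ) - 1 := by
        have h2 : |r i| = (d : ℤ) * |s i| := by
          rw [hsd i, abs_mul, abs_of_nonneg (by positivity : (0:ℤ) ≤ (d:ℤ))]
        have := hr i
        omega
      rw [le_div_iff₀ (by exact_mod_cast hdpos : (0:ℝ) < (d:ℝ))]
      have h3 : ((d : ℤ) * |s i| : ℝ) ≤ (m : ℝ) - 1 := by exact_mod_cast h1
      push_cast at h3
      linarith
    · -- the decomposition
      intro i
      dsimp only
      rw [inv_mul_cancel_right]
end
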